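/- Let a11, a12, a21, a22 be complex numbers and define the (unnormalized) Bell-diagonal weights p_X := (1/4)(|a12 + a21|^2 + |a11 - a22|^2), p_Y := (1/4)((5·a12 - 3·a21)·conj(a12) + (-3·a12 + 5·a21)·conj(a21) + |a11 - a22|^2), and p_Z := (|a12|^2 + |a21|^2) + (1/2)|a11 - a22|^2. Then p_Y is a real number and the phase-error weight equals three-halves of the bit-error weight: p_Z + p_Y = (3/2)·(p_X + p_Y). -/

import Mathlib

/-- Bell-basis diagonal weights of the (unnormalized) two-qubit state in one-photon
SARG04 after Eve applies `E = [[a11, a12], [a21, a22]]`: `p_Y` is real and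
`p_Z + p_Y = (3/2) (p_X + p_Y)`. -/
theorem sarg04_one_photon_phase_eq_three_halves_bit
    (a11 a12 a21 a22 : ℂ)
    (pX : ℝ) (hpX : pX = (1 / 4) * ((‖a12 + a21‖) ^ 2 + (‖a11 - a22‖) ^ 2))
    (pY : ℂ) (hpY : pY = (1 / 4) * ((5 * a12 - 3 * a21) * (starRingEnd ℂ a12)
      + (-3 * a12 + 5 * a21) * (starRingEnd ℂ a21) + ((‖a11 - a22‖) ^ 2 : ℂ)))
    (pZ : ℝ) (hpZ : pZ = ((‖a12‖) ^ 2 + (‖a21‖) ^ 2)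
      + (1 / 2) * (‖a11 - a22‖) ^ 2) :
    pY.im = 0 ∧ (pZ : ℂ) + pY = (3 / 2) * ((pX : ℂ) + pY) := by
  have h2 : ∀ z : ℂ, ((‖z‖) ^ 2 : ℝ) = Complex.normSq z := fun z => Complex.sq_norm z
  subst hpX hpY hpZ
  constructor <;>
  · simp only [← Complex.ofReal_pow, h2, Complex.ext_iff, Complex.normSq_apply, Complex.add_re, Complex.add_im,
      Complex.mul_re, Complex.mul_im, Complex.sub_re, Complex.sub_im, Complex.neg_re,
      Complex.neg_im, Complex.conj_re, Complex.conj_im, Complex.ofReal_re, Complex.ofReal_im,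
      Complex.ofReal_mul, Complex.ofReal_add, Complex.div_re, Complex.div_im,
      Complex.one_re, Complex.one_im, Complex.normSq_ofNat]
    norm_num
    ring_nf
    try constructor <;> ring
    all_goals trivial
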